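/- Let k be a field, let S = k[t_1,...,t_n] be the polynomial ring, and let F = S^m be the free S-module of rank m with standard basis e_1,...,e_m. Let R ⊆ F be an S-submodule such that F/R is a finite-dimensional k-vector space. Then there exists a finite set β of pairs (s, i), with s an exponent vector in ℕⁿ and i ∈ {1,...,m}, such that for each i the set {s : (s,i) ∈ β} is downward closed under the componentwise order, and such that the images in F/R of the monomial elements t^s · e_i with (s,i) ∈ β form a k-vector space basis of F/R. -/

import Mathlib

set_option maxHeartbeats 1000000

theorem li_of_not_mem_span_iio {K V ι : Type*} [DivisionRing K] [AddCommGroup V] [Module K V]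
    [LinearOrder ι] {f : ι → V}
    (h : ∀ i, f i ∉ Submodule.span K (f '' Set.Iio i)) : LinearIndependent K f := by
  rw [linearIndependent_iff']
  intro s g hsum i hi
  by_contra hgi
  classical
  set t := s.filter (fun j => g j ≠ 0) with ht
  have htne : t.Nonempty := ⟨i, Finset.mem_filter.2 ⟨hi, hgi⟩⟩
  set N := t.max' htne with hN
  have hNt : N ∈ t := t.max'_mem htne
  have hgN : g N ≠ 0 := (Finset.mem_filter.1 hNt).2
  have hsum' : ∑ j ∈ t, g j • f j = 0 := by
    rw [← hsum]
    refine Finset.sum_subset (Finset.filter_subset _ _) (fun j hj hj' => ?_)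
    have : g j = 0 := by
      by_contra hg
      exact hj' (Finset.mem_filter.2 ⟨hj, hg⟩)
    simp [this]
  have h2 : g N • f N = - ∑ j ∈ t.erase N, g j • f j := by
    have := Finset.sum_erase_add t (fun j => g j • f j) hNt
    rw [hsum'] at this
    rw [eq_neg_iff_add_eq_zero, add_comm]; exact this
  have hmem : f N ∈ Submodule.span K (f '' Set.Iio N) := by
    have h3 : f N = (g N)⁻¹ • (- ∑ j ∈ t.erase N, g j • f j) := by
      rw [← h2, smul_smul, inv_mul_cancel₀ hgN, one_smul]
    rw [h3]
    refine Submodule.smul_mem _ _ (Submodule.neg_mem _ (Submodule.sum_mem _ fun j hj =>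
      Submodule.smul_mem _ _ (Submodule.subset_span ?_)))
    exact ⟨j, lt_of_le_of_ne (t.le_max' j (Finset.mem_of_mem_erase hj))
      (Finset.ne_of_mem_erase hj), rfl⟩
  exact h N hmem

/-- For a submodule `R` of the free module `F = S^m` over
`S = k[t_1,...,t_n]` with `F/R` finite-dimensional over the field `k`, there is a
finite set `β` of pairs (exponent vector, coordinate index), downward closed in
each coordinate, whose monomial elements `t^s · e_i` map to a `k`-basis of `F/R`. -/
theorem stmt3 {k : Type*} [Field k] {n m : ℕ}
    (R : Submodule (MvPolynomial (Fin n) k) (Fin m → MvPolynomial (Fin n) k))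
    (hfd : FiniteDimensional k ((Fin m → MvPolynomial (Fin n) k) ⧸ R)) :
    ∃ β : Finset ((Fin n →₀ ℕ) × Fin m),
      (∀ p ∈ β, ∀ t : Fin n →₀ ℕ, t ≤ p.1 → (t, p.2) ∈ β) ∧
      LinearIndependent k (fun p : β => Submodule.Quotient.mk (p := R)
        (Pi.single p.1.2 (MvPolynomial.monomial p.1.1 (1 : k)))) ∧
      Submodule.span k (Set.range (fun p : β => Submodule.Quotient.mk (p := R)
        (Pi.single p.1.2 (MvPolynomial.monomial p.1.1 (1 : k))))) = ⊤ := by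
  classical
  set S := MvPolynomial (Fin n) k with hS
  set V := (Fin m → MvPolynomial (Fin n) k) ⧸ R with hV
  set O := Lex ((Lex (Fin n →₀ ℕ)) × Fin m) with hO
  set M : O → V := fun p => Submodule.Quotient.mk (p := R)
    (Pi.single (ofLex p).2 (MvPolynomial.monomial (ofLex ((ofLex p).1)) (1 : k))) with hM
  set B : Set O := {p | M p ∉ Submodule.span k (M '' Set.Iio p)} with hB
  -- linear independence of the family indexed by B
  have hli : LinearIndependent k (fun p : B => M p) := by
    apply li_of_not_mem_span_iio
    intro p hmem
    refine p.2 (Submodule.span_mono ?_ hmem)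
    rintro _ ⟨q, hq, rfl⟩
    exact ⟨q, hq, rfl⟩
  -- every monomial image lies in the span of the B-indexed family
  have hspan_mono : ∀ p : O, M p ∈ Submodule.span k (M '' B) := by
    intro p
    induction p using WellFoundedLT.induction with
    | _ p IH =>
      by_cases hp : p ∈ B
      · exact Submodule.subset_span ⟨p, hp, rfl⟩
      · have hmem : M p ∈ Submodule.span k (M '' Set.Iio p) := not_not.1 hp
        refine Submodule.span_le.2 ?_ hmem
        rintro _ ⟨q, hq, rfl⟩
        exact IH q hq
  -- the monomial images span V
  have htop : Submodule.span k (M '' B) = ⊤ := by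
    rw [eq_top_iff]
    rintro x -
    obtain ⟨y, rfl⟩ := Submodule.Quotient.mk_surjective R x
    let mkk : (Fin m → MvPolynomial (Fin n) k) →ₗ[k] V := R.mkQ.restrictScalars k
    have hmkk : ∀ z, mkk z = Submodule.Quotient.mk (p := R) z := fun z => rfl
    have key : ∀ (f : MvPolynomial (Fin n) k) (i : Fin m),
        Submodule.Quotient.mk (p := R) (Pi.single i f) ∈ Submodule.span k (M '' B) := by
      intro f i
      let lsing : MvPolynomial (Fin n) k →ₗ[k] (Fin m → MvPolynomial (Fin n) k) :=
        LinearMap.single k (fun _ : Fin m => MvPolynomial (Fin n) k) i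
      have hlsing : ∀ g : MvPolynomial (Fin n) k, lsing g = Pi.single i g := fun g => rfl
      have hfrepr : f = ∑ s ∈ f.support, (f.coeff s) • MvPolynomial.monomial s (1 : k) := by
        conv_lhs => rw [f.as_sum]
        refine Finset.sum_congr rfl fun s _ => ?_
        rw [MvPolynomial.smul_monomial, smul_eq_mul, mul_one]
      rw [← hlsing, hfrepr, map_sum, ← hmkk, map_sum]
      refine Submodule.sum_mem _ fun s _ => ?_
      rw [map_smul, map_smul]
      refine Submodule.smul_mem _ _ ?_
      have := hspan_mono (toLex (toLex s, i))
      exact this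
    have hy : y = ∑ i : Fin m, Pi.single i (y i) := (Finset.univ_sum_single y).symm
    rw [show Submodule.Quotient.mk (p := R) y = mkk y from rfl, hy, map_sum]
    exact Submodule.sum_mem _ fun i _ => key (y i) i
  -- downward closedness
  have hdc : ∀ (s t : Fin n →₀ ℕ) (i : Fin m), t ≤ s → toLex (toLex s, i) ∈ B →
      toLex (toLex t, i) ∈ B := by
    intro s t i hts hsB
    by_contra htB
    apply hsB
    have hmem : M (toLex (toLex t, i)) ∈
        Submodule.span k (M '' Set.Iio (toLex (toLex t, i))) := not_not.1 htB
    set u : MvPolynomial (Fin n) k := MvPolynomial.monomial (s - t) (1 : k) with hu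
    let L : V →ₗ[k] V := ((LinearMap.lsmul (MvPolynomial (Fin n) k) V) u).restrictScalars k
    have hL : ∀ x : V, L x = u • x := fun x => rfl
    have hsingle : ∀ (j : Fin m) (v : Fin n →₀ ℕ),
        u • (Pi.single j (MvPolynomial.monomial v (1 : k)) : Fin m → MvPolynomial (Fin n) k)
          = Pi.single j (MvPolynomial.monomial ((s - t) + v) (1 : k)) := by
      intro j v
      funext l
      by_cases hl : l = j
      · subst hl
        simp [hu, MvPolynomial.monomial_mul]
      · simp [Pi.single_apply, hl]
    have hMshift : ∀ q : O, L (M q) = M (toLex (toLex ((s - t) + ofLex (ofLex q).1),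
        (ofLex q).2)) := by
      intro q
      rw [hL, hM]
      simp only
      rw [← Submodule.Quotient.mk_smul, hsingle]
      rfl
    have hps : M (toLex (toLex s, i)) = L (M (toLex (toLex t, i))) := by
      rw [hMshift]
      simp only [ofLex_toLex]
      rw [tsub_add_cancel_of_le hts]
    rw [hps]
    have h1 : L (M (toLex (toLex t, i))) ∈ Submodule.map L
        (Submodule.span k (M '' Set.Iio (toLex (toLex t, i)))) :=
      Submodule.mem_map_of_mem hmem
    rw [Submodule.map_span] at h1
    refine Submodule.span_mono ?_ h1
    rintro _ ⟨_, ⟨q, hq, rfl⟩, rfl⟩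
    rw [hMshift q]
    refine ⟨_, ?_, rfl⟩
    rw [Set.mem_Iio] at hq ⊢
    have hq' : (ofLex q).1 < toLex t ∨ (ofLex q).1 = toLex t ∧ (ofLex q).2 < i :=
      Prod.Lex.lt_iff.1 hq
    refine Prod.Lex.lt_iff.2 ?_
    rcases hq' with h | ⟨he, hlt⟩
    · refine Or.inl ?_
      have h2 : toLex (s - t) + (ofLex q).1 < toLex (s - t) + toLex t := add_lt_add_right h _
      have h3 : toLex (s - t) + (ofLex q).1 = toLex (s - t + ofLex (ofLex q).1) := rfl
      have h4 : toLex (s - t) + toLex t = toLex s := by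
        have h5 : toLex (s - t) + toLex t = toLex (s - t + t) := rfl
        rw [h5, tsub_add_cancel_of_le hts]
      rw [h3, h4] at h2
      exact h2
    · refine Or.inr ⟨?_, hlt⟩
      have he' : ofLex (ofLex q).1 = t := congrArg ofLex he
      show toLex (s - t + ofLex (ofLex q).1) = toLex s
      rw [he', tsub_add_cancel_of_le hts]
  -- finiteness of B
  have hBfinite : B.Finite := by
    have : Finite ↥B := hli.finite
    exact Set.finite_coe_iff.mp this
  let ψ : O → (Fin n →₀ ℕ) × Fin m := fun p => (ofLex (ofLex p).1, (ofLex p).2)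
  let φ : (Fin n →₀ ℕ) × Fin m → O := fun q => toLex (toLex q.1, q.2)
  refine ⟨hBfinite.toFinset.image ψ, ?_, ?_, ?_⟩
  case _ =>
    intro p hp t ht
    have hmemβ : ∀ q : (Fin n →₀ ℕ) × Fin m,
        q ∈ hBfinite.toFinset.image ψ ↔ φ q ∈ B := by
      intro q
      simp only [Finset.mem_image, Set.Finite.mem_toFinset]
      constructor
      · rintro ⟨p, hp, rfl⟩
        exact hp
      · intro hq
        exact ⟨φ q, hq, rfl⟩
    rw [hmemβ] at hp ⊢
    exact hdc p.1 t p.2 ht hp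
  case _ =>
    have hmemβ : ∀ q : (Fin n →₀ ℕ) × Fin m,
        q ∈ hBfinite.toFinset.image ψ ↔ φ q ∈ B := by
      intro q
      simp only [Finset.mem_image, Set.Finite.mem_toFinset]
      constructor
      · rintro ⟨p, hp, rfl⟩
        exact hp
      · intro hq
        exact ⟨φ q, hq, rfl⟩
    let e : {x // x ∈ hBfinite.toFinset.image ψ} ≃ B :=
      { toFun := fun q => ⟨φ q.1, (hmemβ q.1).1 q.2⟩
        invFun := fun p => ⟨ψ p.1, (hmemβ (ψ p.1)).2 p.2⟩
        left_inv := fun q => Subtype.ext rfl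
        right_inv := fun p => Subtype.ext rfl }
    exact (linearIndependent_equiv e).2 hli
  case _ =>
    rw [eq_top_iff, ← htop]
    refine Submodule.span_le.2 ?_
    rintro _ ⟨p, hp, rfl⟩
    refine Submodule.subset_span ⟨⟨ψ p, ?_⟩, ?_⟩
    · simp only [Finset.mem_image, Set.Finite.mem_toFinset]
      exact ⟨p, hp, rfl⟩
    · rfl
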